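/- Let G be a finite simple graph and {x,y} an edge with 1 ≤ D_x ≤ D_y. Define the exclusive neighborhoods U_x = Γ(x) \ (Γ(y) ∪ {y}) and U_y = Γ(y) \ (Γ(x) ∪ {x}), and let φ : U_x → U_y be an injection. Then for every α ∈ [1/2, 1), writing β = 1−α, there exists a coupling π of m_x^α and m_y^α whose transport cost is at most (α − β/D_y) + (β/D_y)·∑_{u ∈ U_x} d(u, φ(u)) + 3β·(1 − D_x/D_y). -/

import Mathlib

open Finset

namespace CurvGraph

variable {V : Type*} [Fintype V] [DecidableEq V]

/-- The `α`-lazy neighbour measure at `x`: mass `α` at `x` and `(1-α)/D_x` at each neighbour. -/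
noncomputable def lazy (G : SimpleGraph V) [DecidableRel G.Adj] (α : ℝ) (x : V) : V → ℝ :=
  fun v => if v = x then α else if G.Adj x v then (1 - α) / (G.degree x : ℝ) else 0

/-- `π` is a coupling of the measures `m1` and `m2` on `V`. -/
def IsCoupling (π : V × V → ℝ) (m1 m2 : V → ℝ) : Prop :=
  (∀ p, 0 ≤ π p) ∧ (∀ u, ∑ v, π (u, v) = m1 u) ∧ (∀ v, ∑ u, π (u, v) = m2 v)

/-- Transport cost of `π` with respect to the graph distance of `G`. -/
noncomputable def cost (G : SimpleGraph V) (π : V × V → ℝ) : ℝ :=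
  ∑ p : V × V, π p * (G.dist p.1 p.2 : ℝ)

private lemma sum_ite_pull {γ : Type*} [Fintype γ] (P : Prop) [Decidable P] (f : γ → ℝ) :
    ∑ i : γ, (if P then f i else 0) = if P then ∑ i : γ, f i else 0 := by
  split_ifs <;> simp

set_option maxHeartbeats 1000000 in
/-- Coupling upper bound from an injection between exclusive neighbourhoods.
Given an edge `{x,y}` with `1 ≤ D_x ≤ D_y` and an injection `φ` from
`U_x = Γ(x) \ (Γ(y) ∪ {y})` into `U_y = Γ(y) \ (Γ(x) ∪ {x})`, for every `α ∈ [1/2, 1)`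
(with `β = 1-α`) there is a coupling of `m_x^α` and `m_y^α` with transport cost at most
`(α − β/D_y) + (β/D_y)·∑_{u ∈ U_x} d(u, φ(u)) + 3β·(1 − D_x/D_y)`. -/
theorem coupling_from_injection
    (G : SimpleGraph V) [DecidableRel G.Adj] (x y : V) (hxy : G.Adj x y)
    (hDx : 1 ≤ G.degree x) (hord : G.degree x ≤ G.degree y)
    (φ : V → V)
    (hmap : ∀ u ∈ G.neighborFinset x \ (insert y (G.neighborFinset y)),
        φ u ∈ G.neighborFinset y \ (insert x (G.neighborFinset x)))
    (hinj : Set.InjOn φ ↑(G.neighborFinset x \ (insert y (G.neighborFinset y))))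
    (α : ℝ) (hα2 : 1/2 ≤ α) (hα1 : α < 1) :
    ∃ π : V × V → ℝ, IsCoupling π (lazy G α x) (lazy G α y) ∧
      cost G π ≤
        (α - (1 - α) / (G.degree y : ℝ))
        + ((1 - α) / (G.degree y : ℝ)) *
            ∑ u ∈ G.neighborFinset x \ (insert y (G.neighborFinset y)),
              (G.dist u (φ u) : ℝ)
        + 3 * (1 - α) * (1 - (G.degree x : ℝ) / (G.degree y : ℝ)) := by
  classical
  have hxNy : x ∈ G.neighborFinset y := by simpa using hxy.symm
  have hyNx : y ∈ G.neighborFinset x := by simpa using hxy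
  have hxNx : x ∉ G.neighborFinset x := by simp
  have hyNy : y ∉ G.neighborFinset y := by simp
  have hxny : x ≠ y := hxy.ne
  set Nx := G.neighborFinset x with hNxd
  set Ny := G.neighborFinset y with hNyd
  set dx := (G.degree x : ℝ) with hdxd
  set dy := (G.degree y : ℝ) with hdyd
  set β := 1 - α with hβd
  set Ux := Nx \ insert y Ny with hUxd
  set Uy := Ny \ insert x Nx with hUyd
  set Cb := Nx ∩ Ny with hCbd
  set S := insert x (Nx.erase y) with hSd
  set W := Uy \ Ux.image φ with hWd
  set c := β / (dx * dy) with hcd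
  -- numeric facts
  have hdx1 : (1:ℝ) ≤ dx := by rw [hdxd]; exact_mod_cast hDx
  have hdxy : dx ≤ dy := by rw [hdxd, hdyd]; exact_mod_cast hord
  have hdxpos : (0:ℝ) < dx := lt_of_lt_of_le one_pos hdx1
  have hdypos : (0:ℝ) < dy := lt_of_lt_of_le hdxpos hdxy
  have hβ0 : (0:ℝ) < β := by rw [hβd]; linarith
  have hβα : β ≤ α := by rw [hβd]; linarith
  have hc0 : (0:ℝ) ≤ c := by rw [hcd]; positivity
  have hbdy0 : (0:ℝ) ≤ β/dy := by positivity
  have hbdx0 : (0:ℝ) ≤ β/dx := by positivity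
  have hβdx : β/dx ≤ β := div_le_self hβ0.le hdx1
  have hαβ : (0:ℝ) ≤ α - β/dx := by linarith
  have hdyx : β/dy ≤ β/dx := div_le_div_of_nonneg_left hβ0.le hdxpos hdxy
  -- membership facts
  have hxCb : x ∉ Cb := by simp [hCbd, hxNx]
  have hyCb : y ∉ Cb := by simp [hCbd, hyNy]
  have hxUx : x ∉ Ux := by simp [hUxd, hxNx]
  have hyUx : y ∉ Ux := by simp [hUxd]
  have hxUy : x ∉ Uy := by simp [hUyd]
  have hyUy : y ∉ Uy := by simp [hUyd, hyNy]
  have hxS : x ∈ S := Finset.mem_insert_self _ _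
  have hyS : y ∉ S := by simp [hSd, hxny.symm]
  have himg : Ux.image φ ⊆ Uy := by
    intro v hv
    obtain ⟨u, hu, rfl⟩ := Finset.mem_image.mp hv
    exact hmap u hu
  have hWUy : W ⊆ Uy := by rw [hWd]; exact Finset.sdiff_subset
  have hximg : x ∉ Ux.image φ := fun h => hxUy (himg h)
  have hyimg : y ∉ Ux.image φ := fun h => hyUy (himg h)
  have hxW : x ∉ W := fun h => hxUy (hWUy h)
  have hyW : y ∉ W := fun h => hyUy (hWUy h)
  -- cardinalities
  have hNxcard : Nx.card = G.degree x := by rw [hNxd]; exact G.card_neighborFinset_eq_degree x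
  have hNycard : Ny.card = G.degree y := by rw [hNyd]; exact G.card_neighborFinset_eq_degree y
  have hxE : x ∉ Nx.erase y := fun h => hxNx (Finset.mem_of_mem_erase h)
  have hScard : (S.card : ℝ) = dx := by
    have h1 : S.card = G.degree x := by
      rw [hSd, Finset.card_insert_of_notMem hxE, Finset.card_erase_of_mem hyNx, hNxcard]
      omega
    rw [h1, hdxd]
  have hUycard : (Uy.card : ℝ) = dy - (Cb.card : ℝ) - 1 := by
    have h1 : Uy.card + (Ny ∩ insert x Nx).card = Ny.card := by
      rw [hUyd]; exact Finset.card_sdiff_add_card_inter _ _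
    have h2 : Ny ∩ insert x Nx = insert x Cb := by
      rw [Finset.inter_insert_of_mem hxNy, hCbd, Finset.inter_comm]
    have h3 : (insert x Cb).card = Cb.card + 1 := Finset.card_insert_of_notMem hxCb
    rw [h2, h3, hNycard] at h1
    have := congrArg (Nat.cast : ℕ → ℝ) h1
    push_cast at this
    rw [hdyd]; linarith
  have hUxcard : (Ux.card : ℝ) = dx - (Cb.card : ℝ) - 1 := by
    have h1 : Ux.card + (Nx ∩ insert y Ny).card = Nx.card := by
      rw [hUxd]; exact Finset.card_sdiff_add_card_inter _ _
    have h2 : Nx ∩ insert y Ny = insert y Cb := by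
      rw [Finset.inter_insert_of_mem hyNx, hCbd]
    have h3 : (insert y Cb).card = Cb.card + 1 := Finset.card_insert_of_notMem hyCb
    rw [h2, h3, hNxcard] at h1
    have := congrArg (Nat.cast : ℕ → ℝ) h1
    push_cast at this
    rw [hdxd]; linarith
  have hWcard : (W.card : ℝ) = dy - dx := by
    have h1 : W.card + (Ux.image φ).card = Uy.card := by
      rw [hWd]; exact Finset.card_sdiff_add_card_eq_card himg
    have h2 : (Ux.image φ).card = Ux.card := Finset.card_image_of_injOn hinj
    rw [h2] at h1
    have := congrArg (Nat.cast : ℕ → ℝ) h1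
    push_cast at this
    linarith [hUycard, hUxcard]
  have hWc : (W.card : ℝ) * c = β/dx - β/dy := by
    rw [hWcard, hcd]; field_simp
  have hSc : (S.card : ℝ) * c = β/dy := by
    rw [hScard, hcd]; field_simp
  -- distance facts
  have hdistxy : (G.dist x y : ℝ) = 1 := by
    have : G.dist x y = 1 := SimpleGraph.dist_eq_one_iff_adj.mpr hxy
    rw [this]; norm_num
  have hd3 : ∀ u ∈ S, ∀ v ∈ W, (G.dist u v : ℝ) ≤ 3 := by
    intro u hu v hv
    have hvUy : v ∈ Uy := hWUy hv
    have hvNy : v ∈ Ny := (Finset.mem_sdiff.mp hvUy).1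
    have hadjyv : G.Adj y v := by
      rwa [hNyd, SimpleGraph.mem_neighborFinset] at hvNy
    have hn : G.dist u v ≤ 3 := by
      rcases Finset.mem_insert.mp (by rw [hSd] at hu; exact hu) with rfl | hu'
      · have := SimpleGraph.dist_le (SimpleGraph.Walk.cons hxy
          (SimpleGraph.Walk.cons hadjyv SimpleGraph.Walk.nil))
        simpa using this.trans (by norm_num)
      · have huNx : u ∈ Nx := Finset.mem_of_mem_erase hu'
        have hadjux : G.Adj u x := by
          rw [hNxd, SimpleGraph.mem_neighborFinset] at huNx
          exact huNx.symm
        have := SimpleGraph.dist_le (SimpleGraph.Walk.cons hadjux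
          (SimpleGraph.Walk.cons hxy (SimpleGraph.Walk.cons hadjyv SimpleGraph.Walk.nil)))
        simpa using this
    exact_mod_cast hn
  -- the coupling
  refine ⟨fun p =>
      (if p.1 = x then (if p.2 = x then β/dy else 0) + (if p.2 = y then α - β/dx else 0) else 0)
    + (if p.1 = y then (if p.2 = y then β/dx else 0) else 0)
    + (if p.1 ∈ Cb then (if p.2 = p.1 then β/dy else 0) else 0)
    + (if p.1 ∈ Ux then (if p.2 = φ p.1 then β/dy else 0) else 0)
    + (if p.1 ∈ S then (if p.2 ∈ W then c else 0) else 0), ⟨?_, ?_, ?_⟩, ?_⟩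
  · -- nonnegativity
    intro p; dsimp only
    apply add_nonneg; apply add_nonneg; apply add_nonneg; apply add_nonneg
    all_goals split_ifs <;> linarith
  · -- first marginal
    intro u
    dsimp only
    rw [Finset.sum_add_distrib, Finset.sum_add_distrib, Finset.sum_add_distrib,
      Finset.sum_add_distrib]
    have e1 : ∑ v : V, (if u = x then (if v = x then β/dy else 0)
        + (if v = y then α - β/dx else 0) else 0)
        = (if u = x then β/dy + (α - β/dx) else 0) := by
      by_cases h : u = x <;> simp [h, Finset.sum_add_distrib]
    have e2 : ∑ v : V, (if u = y then (if v = y then β/dx else 0) else 0)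
        = (if u = y then β/dx else 0) := by
      by_cases h : u = y <;> simp [h]
    have e3 : ∑ v : V, (if u ∈ Cb then (if v = u then β/dy else 0) else 0)
        = (if u ∈ Cb then β/dy else 0) := by
      by_cases h : u ∈ Cb <;> simp [h]
    have e4 : ∑ v : V, (if u ∈ Ux then (if v = φ u then β/dy else 0) else 0)
        = (if u ∈ Ux then β/dy else 0) := by
      by_cases h : u ∈ Ux <;> simp [h]
    have e5 : ∑ v : V, (if u ∈ S then (if v ∈ W then c else 0) else 0)
        = (if u ∈ S then (W.card : ℝ) * c else 0) := by
      by_cases h : u ∈ S <;>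
        simp [h, Finset.sum_ite_mem, Finset.univ_inter, Finset.sum_const, nsmul_eq_mul]
    rw [e1, e2, e3, e4, e5]
    simp only [lazy]
    rw [← hβd, ← hdxd]
    by_cases hux : u = x
    · rw [if_pos hux, if_neg (show ¬u = y by rw [hux]; exact hxny),
        if_neg (show u ∉ Cb by rw [hux]; exact hxCb),
        if_neg (show u ∉ Ux by rw [hux]; exact hxUx),
        if_pos (show u ∈ S by rw [hux]; exact hxS), if_pos hux]
      linarith [hWc]
    · by_cases huy : u = y
      · rw [if_neg hux, if_pos huy,
          if_neg (show u ∉ Cb by rw [huy]; exact hyCb),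
          if_neg (show u ∉ Ux by rw [huy]; exact hyUx),
          if_neg (show u ∉ S by rw [huy]; exact hyS), if_neg hux,
          if_pos (show G.Adj x u by rw [huy]; exact hxy)]
        ring
      · by_cases hun : u ∈ Nx
        · have huS : u ∈ S := by
            rw [hSd]; exact Finset.mem_insert_of_mem (Finset.mem_erase.mpr ⟨huy, hun⟩)
          have hadj : G.Adj x u := by
            have h := hun; rwa [hNxd, SimpleGraph.mem_neighborFinset] at h
          by_cases huny : u ∈ Ny
          · have huCb : u ∈ Cb := by rw [hCbd]; exact Finset.mem_inter.mpr ⟨hun, huny⟩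
            have huUx : u ∉ Ux := by simp [hUxd, huny]
            rw [if_neg hux, if_neg huy, if_pos huCb, if_neg huUx, if_pos huS, if_neg hux,
              if_pos hadj]
            linarith [hWc]
          · have huCb : u ∉ Cb := by simp [hCbd, huny]
            have huUx : u ∈ Ux := by simp [hUxd, hun, huny, huy]
            rw [if_neg hux, if_neg huy, if_neg huCb, if_pos huUx, if_pos huS, if_neg hux,
              if_pos hadj]
            linarith [hWc]
        · have hadj : ¬ G.Adj x u := by
            have h := hun; rwa [hNxd, SimpleGraph.mem_neighborFinset] at h
          have huCb : u ∉ Cb := by simp [hCbd, hun]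
          have huUx : u ∉ Ux := by simp [hUxd, hun]
          have huS : u ∉ S := by
            rw [hSd]
            intro h
            rcases Finset.mem_insert.mp h with h' | h'
            · exact hux h'
            · exact hun (Finset.mem_of_mem_erase h')
          rw [if_neg hux, if_neg huy, if_neg huCb, if_neg huUx, if_neg huS, if_neg hux,
            if_neg hadj]
          ring
  · -- second marginal
    intro v
    dsimp only
    rw [Finset.sum_add_distrib, Finset.sum_add_distrib, Finset.sum_add_distrib,
      Finset.sum_add_distrib]
    have g1 : ∑ u : V, (if u = x then (if v = x then β/dy else 0)
        + (if v = y then α - β/dx else 0) else 0)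
        = (if v = x then β/dy else 0) + (if v = y then α - β/dx else 0) := by simp
    have g2 : ∑ u : V, (if u = y then (if v = y then β/dx else 0) else 0)
        = (if v = y then β/dx else 0) := by simp
    have g3 : ∑ u : V, (if u ∈ Cb then (if v = u then β/dy else 0) else 0)
        = (if v ∈ Cb then β/dy else 0) := by
      rw [Finset.sum_ite_mem, Finset.univ_inter]
      exact Finset.sum_ite_eq _ _ _
    have g4 : ∑ u : V, (if u ∈ Ux then (if v = φ u then β/dy else 0) else 0)
        = (if v ∈ Ux.image φ then β/dy else 0) := by
      rw [Finset.sum_ite_mem, Finset.univ_inter]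
      by_cases hv : v ∈ Ux.image φ
      · obtain ⟨u0, hu0, hphi⟩ := Finset.mem_image.mp hv
        rw [if_pos hv]
        calc ∑ u ∈ Ux, (if v = φ u then β/dy else 0)
            = ∑ u ∈ Ux, (if u = u0 then β/dy else 0) := by
              refine Finset.sum_congr rfl fun u hu => ?_
              by_cases h : u = u0
              · subst h; rw [if_pos hphi.symm, if_pos rfl]
              · rw [if_neg, if_neg h]
                intro hvv
                exact h (hinj (Finset.mem_coe.mpr hu) (Finset.mem_coe.mpr hu0)
                  (by rw [← hvv, hphi]))
          _ = β/dy := by rw [Finset.sum_ite_eq' _ u0, if_pos hu0]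
      · rw [if_neg hv]
        exact Finset.sum_eq_zero fun u hu =>
          if_neg fun hvv => hv (Finset.mem_image.mpr ⟨u, hu, hvv.symm⟩)
    have g5 : ∑ u : V, (if u ∈ S then (if v ∈ W then c else 0) else 0)
        = (if v ∈ W then (S.card : ℝ) * c else 0) := by
      by_cases hv : v ∈ W <;>
        simp [hv, Finset.sum_ite_mem, Finset.univ_inter, Finset.sum_const, nsmul_eq_mul]
    rw [g1, g2, g3, g4, g5]
    simp only [lazy]
    rw [← hβd, ← hdyd]
    by_cases hvy : v = y
    · rw [if_neg (show ¬v = x by rw [hvy]; exact hxny.symm), if_pos hvy, if_pos hvy,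
        if_neg (show v ∉ Cb by rw [hvy]; exact hyCb),
        if_neg (show v ∉ Ux.image φ by rw [hvy]; exact hyimg),
        if_neg (show v ∉ W by rw [hvy]; exact hyW), if_pos hvy]
      ring
    · by_cases hvx : v = x
      · rw [if_pos hvx, if_neg hvy, if_neg hvy,
          if_neg (show v ∉ Cb by rw [hvx]; exact hxCb),
          if_neg (show v ∉ Ux.image φ by rw [hvx]; exact hximg),
          if_neg (show v ∉ W by rw [hvx]; exact hxW), if_neg hvy,
          if_pos (show G.Adj y v by rw [hvx]; exact hxy.symm)]
        ring
      · by_cases hvNy : v ∈ Ny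
        · have hadj : G.Adj y v := by
            have h := hvNy; rwa [hNyd, SimpleGraph.mem_neighborFinset] at h
          by_cases hvNx : v ∈ Nx
          · have hvCb : v ∈ Cb := by rw [hCbd]; exact Finset.mem_inter.mpr ⟨hvNx, hvNy⟩
            have hvUy : v ∉ Uy := by simp [hUyd, hvNx]
            have hvimg : v ∉ Ux.image φ := fun h => hvUy (himg h)
            have hvW : v ∉ W := fun h => hvUy (hWUy h)
            rw [if_neg hvx, if_neg hvy, if_neg hvy, if_pos hvCb, if_neg hvimg,
              if_neg hvW, if_neg hvy, if_pos hadj]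
            ring
          · by_cases hvimg : v ∈ Ux.image φ
            · have hvW : v ∉ W := by simp [hWd, hvimg]
              have hvCb : v ∉ Cb := by simp [hCbd, hvNx]
              rw [if_neg hvx, if_neg hvy, if_neg hvy, if_neg hvCb, if_pos hvimg,
                if_neg hvW, if_neg hvy, if_pos hadj]
              ring
            · have hvW : v ∈ W := by simp [hWd, hUyd, hvNy, hvNx, hvx, hvimg]
              have hvCb : v ∉ Cb := by simp [hCbd, hvNx]
              rw [if_neg hvx, if_neg hvy, if_neg hvy, if_neg hvCb, if_neg hvimg,
                if_pos hvW, if_neg hvy, if_pos hadj]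
              linarith [hSc]
        · have hadj : ¬ G.Adj y v := by
            have h := hvNy; rwa [hNyd, SimpleGraph.mem_neighborFinset] at h
          have hvCb : v ∉ Cb := by simp [hCbd, hvNy]
          have hvUy : v ∉ Uy := by simp [hUyd, hvNy]
          have hvimg : v ∉ Ux.image φ := fun h => hvUy (himg h)
          have hvW : v ∉ W := fun h => hvUy (hWUy h)
          rw [if_neg hvx, if_neg hvy, if_neg hvy, if_neg hvCb, if_neg hvimg,
            if_neg hvW, if_neg hvy, if_neg hadj]
          ring
  · -- cost bound
    have hT1 : (∑ u : V, ∑ v : V, (if u = x then (if v = x then β/dy else 0)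
        + (if v = y then α - β/dx else 0) else 0) * (G.dist u v : ℝ)) ≤ α - β/dy := by
      have h : (∑ u : V, ∑ v : V, (if u = x then (if v = x then β/dy else 0)
          + (if v = y then α - β/dx else 0) else 0) * (G.dist u v : ℝ))
          = β/dy * (G.dist x x : ℝ) + (α - β/dx) * (G.dist x y : ℝ) := by
        simp only [ite_mul, zero_mul, add_mul, Finset.sum_add_distrib, sum_ite_pull,
          Finset.sum_ite_eq', Finset.mem_univ, if_true]
      rw [h, SimpleGraph.dist_self, hdistxy]
      push_cast
      linarith
    have hT2 : (∑ u : V, ∑ v : V, (if u = y then (if v = y then β/dx else 0) else 0)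
        * (G.dist u v : ℝ)) = 0 := by
      simp only [ite_mul, zero_mul, sum_ite_pull, Finset.sum_ite_eq', Finset.mem_univ, if_true]
      simp [SimpleGraph.dist_self]
    have hT3 : (∑ u : V, ∑ v : V, (if u ∈ Cb then (if v = u then β/dy else 0) else 0)
        * (G.dist u v : ℝ)) = 0 := by
      refine Finset.sum_eq_zero fun u _ => ?_
      by_cases h : u ∈ Cb <;> simp [h, SimpleGraph.dist_self]
    have hT4 : (∑ u : V, ∑ v : V, (if u ∈ Ux then (if v = φ u then β/dy else 0) else 0)
        * (G.dist u v : ℝ)) = β/dy * ∑ u ∈ Ux, (G.dist u (φ u) : ℝ) := by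
      rw [Finset.mul_sum]
      rw [show (∑ u : V, ∑ v : V, (if u ∈ Ux then (if v = φ u then β/dy else 0) else 0)
          * (G.dist u v : ℝ))
          = ∑ u : V, (if u ∈ Ux then β/dy * (G.dist u (φ u) : ℝ) else 0) from ?_]
      · rw [Finset.sum_ite_mem, Finset.univ_inter]
      · refine Finset.sum_congr rfl fun u _ => ?_
        by_cases h : u ∈ Ux <;> simp [h]
    have hT5 : (∑ u : V, ∑ v : V, (if u ∈ S then (if v ∈ W then c else 0) else 0)
        * (G.dist u v : ℝ)) ≤ 3 * β * (1 - dx/dy) := by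
      have h1 : (∑ u : V, ∑ v : V, (if u ∈ S then (if v ∈ W then c else 0) else 0)
          * (G.dist u v : ℝ)) = ∑ u ∈ S, ∑ v ∈ W, c * (G.dist u v : ℝ) := by
        rw [show (∑ u : V, ∑ v : V, (if u ∈ S then (if v ∈ W then c else 0) else 0)
            * (G.dist u v : ℝ))
            = ∑ u : V, (if u ∈ S then ∑ v : V, (if v ∈ W then c * (G.dist u v : ℝ) else 0)
              else 0) from ?_]
        · rw [Finset.sum_ite_mem, Finset.univ_inter]
          refine Finset.sum_congr rfl fun u _ => ?_
          rw [Finset.sum_ite_mem, Finset.univ_inter]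
        · refine Finset.sum_congr rfl fun u _ => ?_
          by_cases h : u ∈ S
          · simp only [if_pos h, ite_mul, zero_mul]
          · simp [h]
      have h2 : ∑ u ∈ S, ∑ v ∈ W, c * (G.dist u v : ℝ) ≤ ∑ u ∈ S, ∑ v ∈ W, c * 3 := by
        refine Finset.sum_le_sum fun u hu => Finset.sum_le_sum fun v hv => ?_
        exact mul_le_mul_of_nonneg_left (hd3 u hu v hv) hc0
      have h3 : ∑ u ∈ S, ∑ v ∈ W, c * 3 = (S.card : ℝ) * ((W.card : ℝ) * (c * 3)) := by
        simp [Finset.sum_const, nsmul_eq_mul, mul_assoc]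
      rw [h1]
      refine h2.trans ?_
      rw [h3, hScard, hWcard, hcd]
      have h4 : dx * ((dy - dx) * (β / (dx * dy) * 3)) = 3 * β * (1 - dx/dy) := by
        field_simp
      rw [h4]
    simp only [cost, Fintype.sum_prod_type, add_mul, Finset.sum_add_distrib]
    linarith [hT1, hT2, hT3, hT4, hT5]

end CurvGraph
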